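/- arXiv:1909.13532 — 2 statements merged into one kernel-verified Lean document; each statement's English description precedes it below -/
import Mathlib

section
/- Let G be a planar simple graph and let {u,v} be an edge of G with N(u) ∩ N(v) nonempty. Then the subgraph of G induced by {u,v} ∪ (N(u) ∩ N(v)) has exactly 3·|N(u) ∩ N(v)| edges if and only if the subgraph of G induced by N(u) ∩ N(v) is a path; equivalently, the induced subgraph on {u,v} ∪ (N(u) ∩ N(v)) is a maximal planar graph (a triangulation) if and only if G[N(u) ∩ N(v)] is a path. -/
open SimpleGraph

/-- `H` is a minor of `G`: there is a family of nonempty, connected, pairwise disjoint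
branch sets in `G`, one for each vertex of `H`, with an edge of `G` between the branch
sets of any two adjacent vertices of `H`. -/
def SimpleGraph.IsMinor {W V : Type*} (H : SimpleGraph W) (G : SimpleGraph V) : Prop :=
  ∃ f : W → Set V,
    (∀ w, (f w).Nonempty) ∧
    (∀ w, (G.induce (f w)).Connected) ∧
    (Pairwise fun w₁ w₂ => Disjoint (f w₁) (f w₂)) ∧
    ∀ ⦃w₁ w₂⦄, H.Adj w₁ w₂ → ∃ u ∈ f w₁, ∃ v ∈ f w₂, G.Adj u v

/-- A simple graph is planar iff (by Wagner's theorem) it has neither `K₅` nor `K₃,₃`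
as a minor. -/
def SimpleGraph.IsPlanar {V : Type*} (G : SimpleGraph V) : Prop :=
  ¬ (completeGraph (Fin 5)).IsMinor G ∧
    ¬ (completeBipartiteGraph (Fin 3) (Fin 3)).IsMinor G

/-- A graph is a path graph iff it is connected, acyclic and every vertex has degree at
most 2 (this includes the one-vertex path). -/
def SimpleGraph.IsPathGraph {W : Type*} (H : SimpleGraph W) : Prop :=
  H.Connected ∧ H.IsAcyclic ∧ ∀ x, (H.neighborSet x).ncard ≤ 2

section Helpers

lemma ncard_edgeSet_induce {V : Type*} (G : SimpleGraph V) (T : Set V) :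
    (G.induce T).edgeSet.ncard = {e | e ∈ G.edgeSet ∧ ∀ x ∈ e, x ∈ T}.ncard := by
  rw [← Set.ncard_image_of_injective _ (Sym2.map.injective (Subtype.val_injective (p := (· ∈ T))))]
  congr 1
  ext e
  constructor
  · rintro ⟨e', he', rfl⟩
    induction e' using Sym2.ind with
    | _ a b =>
      refine ⟨he', ?_⟩
      intro x hx
      rw [Sym2.map_pair_eq, Sym2.mem_iff] at hx
      rcases hx with rfl | rfl
      · exact a.2
      · exact b.2
  · rintro ⟨hadj, hmem⟩
    induction e using Sym2.ind with
    | _ x y =>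
      have hx : x ∈ T := hmem x (Sym2.mem_mk_left x y)
      have hy : y ∈ T := hmem y (Sym2.mem_mk_right x y)
      exact ⟨s(⟨x, hx⟩, ⟨y, hy⟩), hadj, by rw [Sym2.map_pair_eq]⟩

lemma count_split {V : Type*} [Fintype V] (G : SimpleGraph V) (S : Set V) (u v : V)
    (huv : G.Adj u v) (hu : u ∉ S) (hv : v ∉ S)
    (hSu : ∀ s ∈ S, G.Adj u s) (hSv : ∀ s ∈ S, G.Adj v s) :
    (G.induce ({u, v} ∪ S)).edgeSet.ncard
      = 2 * S.ncard + 1 + (G.induce S).edgeSet.ncard := by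
  classical
  rw [ncard_edgeSet_induce, ncard_edgeSet_induce]
  have huv' : u ≠ v := huv.ne
  set ES : Set (Sym2 V) := {e | e ∈ G.edgeSet ∧ ∀ x ∈ e, x ∈ S} with hES
  have hdecomp : {e | e ∈ G.edgeSet ∧ ∀ x ∈ e, x ∈ ({u, v} ∪ S : Set V)}
      = insert s(u, v) (((fun w => s(u, w)) '' S ∪ (fun w => s(v, w)) '' S) ∪ ES) := by
    ext e
    induction e using Sym2.ind with
    | _ x y =>
      simp only [Set.mem_setOf_eq, mem_edgeSet, Set.mem_insert_iff,
        Set.mem_union, Set.mem_image]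
      constructor
      · rintro ⟨hadj, hmem⟩
        have hx := hmem x (Sym2.mem_mk_left x y)
        have hy := hmem y (Sym2.mem_mk_right x y)
        rcases hx with (rfl | rfl) | hx
        · rcases hy with (rfl | rfl) | hy
          · exact absurd rfl hadj.ne
          · exact Or.inl rfl
          · exact Or.inr (Or.inl (Or.inl ⟨y, hy, rfl⟩))
        · rcases hy with (rfl | rfl) | hy
          · exact Or.inl (Sym2.eq_swap)
          · exact absurd rfl hadj.ne
          · exact Or.inr (Or.inl (Or.inr ⟨y, hy, rfl⟩))
        · rcases hy with (rfl | rfl) | hy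
          · exact Or.inr (Or.inl (Or.inl ⟨x, hx, Sym2.eq_swap⟩))
          · exact Or.inr (Or.inl (Or.inr ⟨x, hx, Sym2.eq_swap⟩))
          · exact Or.inr (Or.inr ⟨hadj, fun z hz => by
              rcases Sym2.mem_iff.mp hz with rfl | rfl
              · exact hx
              · exact hy⟩)
      · rintro (he | (⟨w, hw, he⟩ | ⟨w, hw, he⟩) | ⟨hadj, hmem⟩)
        · rcases Sym2.eq_iff.mp he with ⟨rfl, rfl⟩ | ⟨rfl, rfl⟩
          · exact ⟨huv, fun z hz => by
              rcases Sym2.mem_iff.mp hz with rfl | rfl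
              · exact Or.inl (Or.inl rfl)
              · exact Or.inl (Or.inr rfl)⟩
          · exact ⟨huv.symm, fun z hz => by
              rcases Sym2.mem_iff.mp hz with rfl | rfl
              · exact Or.inl (Or.inr rfl)
              · exact Or.inl (Or.inl rfl)⟩
        · rcases Sym2.eq_iff.mp he with ⟨h1, h2⟩ | ⟨h1, h2⟩
          · subst h1; subst h2
            exact ⟨hSu w hw, fun z hz => by
              rcases Sym2.mem_iff.mp hz with rfl | rfl
              · exact Or.inl (Or.inl rfl)
              · exact Or.inr hw⟩
          · subst h1; subst h2
            exact ⟨(hSu w hw).symm, fun z hz => by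
              rcases Sym2.mem_iff.mp hz with rfl | rfl
              · exact Or.inr hw
              · exact Or.inl (Or.inl rfl)⟩
        · rcases Sym2.eq_iff.mp he with ⟨h1, h2⟩ | ⟨h1, h2⟩
          · subst h1; subst h2
            exact ⟨hSv w hw, fun z hz => by
              rcases Sym2.mem_iff.mp hz with rfl | rfl
              · exact Or.inl (Or.inr rfl)
              · exact Or.inr hw⟩
          · subst h1; subst h2
            exact ⟨(hSv w hw).symm, fun z hz => by
              rcases Sym2.mem_iff.mp hz with rfl | rfl
              · exact Or.inr hw
              · exact Or.inl (Or.inr rfl)⟩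
        · exact ⟨hadj, fun z hz => Or.inr (hmem z hz)⟩
  rw [hdecomp]
  have hIu : Set.InjOn (fun w => s(u, w)) S := by
    intro w hw w' hw' h
    simp only [Sym2.eq_iff] at h
    rcases h with ⟨-, rfl⟩ | ⟨h1, -⟩
    · rfl
    · exact absurd (h1 ▸ hw') hu
  have hIv : Set.InjOn (fun w => s(v, w)) S := by
    intro w hw w' hw' h
    simp only [Sym2.eq_iff] at h
    rcases h with ⟨-, rfl⟩ | ⟨h1, -⟩
    · rfl
    · exact absurd (h1 ▸ hw') hv
  have hd1 : Disjoint ((fun w => s(u, w)) '' S) ((fun w => s(v, w)) '' S) := by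
    rw [Set.disjoint_left]
    rintro e ⟨w, hw, rfl⟩ ⟨w', hw', he⟩
    simp only [Sym2.eq_iff] at he
    rcases he with ⟨h1, -⟩ | ⟨-, h2⟩
    · exact huv' (h1.symm)
    · exact hu (h2 ▸ hw')
  have hd2 : Disjoint ((fun w => s(u, w)) '' S ∪ (fun w => s(v, w)) '' S) ES := by
    rw [Set.disjoint_left]
    rintro e (⟨w, hw, rfl⟩ | ⟨w, hw, rfl⟩) ⟨-, hmem⟩
    · exact hu (hmem u (Sym2.mem_mk_left u w))
    · exact hv (hmem v (Sym2.mem_mk_left v w))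
  have hnotin : s(u, v) ∉ ((fun w => s(u, w)) '' S ∪ (fun w => s(v, w)) '' S) ∪ ES := by
    rintro ((⟨w, hw, he⟩ | ⟨w, hw, he⟩) | ⟨-, hmem⟩)
    · rcases Sym2.eq_iff.mp he with ⟨-, h2⟩ | ⟨-, hh2⟩
      · exact hv (by rwa [h2] at hw)
      · exact hu (by rwa [hh2] at hw)
    · rcases Sym2.eq_iff.mp he with ⟨h1, -⟩ | ⟨-, h2⟩
      · exact huv' h1.symm
      · exact hu (by rwa [h2] at hw)
    · exact hu (hmem u (Sym2.mem_mk_left u v))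
  rw [Set.ncard_insert_of_notMem hnotin (Set.toFinite _),
    Set.ncard_union_eq hd2 (Set.toFinite _) (Set.toFinite _),
    Set.ncard_union_eq hd1 (Set.toFinite _) (Set.toFinite _),
    Set.ncard_image_of_injOn hIu, Set.ncard_image_of_injOn hIv]
  ring

lemma sup_edge_isAcyclic {W : Type*} {H : SimpleGraph W} (ha : H.IsAcyclic)
    {x y : W} (hxy : x ≠ y) (hr : ¬H.Reachable x y) :
    (H ⊔ edge x y).IsAcyclic := by
  have hadj : ¬H.Adj x y := fun h => hr h.reachable
  have hbridge : (H ⊔ edge x y).IsBridge s(x, y) := by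
    rw [isBridge_iff]
    · intro hreach
      apply hr
      refine Reachable.mono ?_ hreach
      intro a b hab
      simp only [deleteEdges_adj, sup_adj, edge_adj, Set.mem_singleton_iff] at hab
      obtain ⟨h1 | h1, h2⟩ := hab
      · exact h1
      · exfalso
        apply h2
        rcases h1.1 with ⟨rfl, rfl⟩ | ⟨rfl, rfl⟩
        · rfl
        · exact Sym2.eq_swap
  intro w c hc
  by_cases he : s(x, y) ∈ c.edges
  · exact (isBridge_iff_forall_cycle_notMem (c.edges_subset_edgeSet he)).mp hbridge c hc he
  · have htrans : ∀ e ∈ c.edges, e ∈ H.edgeSet := by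
      intro e hee
      have := c.edges_subset_edgeSet hee
      rw [edgeSet_sup, edge_edgeSet_of_ne hxy] at this
      rcases this with h | h
      · exact h
      · exact absurd (h ▸ hee) he
    exact ha (c.transfer H htrans) (hc.transfer htrans)

lemma exists_isTree_ge {W : Type*} [Fintype W] [Nonempty W] :
    ∀ (n : ℕ) (H : SimpleGraph W), Fintype.card (Sym2 W) + 1 - H.edgeSet.ncard ≤ n →
      H.IsAcyclic → ∃ T, H ≤ T ∧ T.IsTree ∧ H.edgeSet.ncard ≤ T.edgeSet.ncard ∧
        (H ≠ T → H.edgeSet.ncard < T.edgeSet.ncard) := by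
  intro n
  induction n with
  | zero =>
    intro H hcard ha
    exfalso
    have hb : H.edgeSet.ncard ≤ Fintype.card (Sym2 W) :=
      (Set.ncard_le_ncard (Set.subset_univ _) Set.finite_univ).trans_eq
        (by rw [Set.ncard_univ, Nat.card_eq_fintype_card])
    omega
  | succ n ih =>
    intro H hcard ha
    by_cases hconn : H.Connected
    · exact ⟨H, le_rfl, ⟨hconn, ha⟩, le_rfl, fun h => absurd rfl h⟩
    · have : ¬H.Preconnected := fun h => hconn ⟨h⟩
      rw [Preconnected] at this
      push_neg at this
      obtain ⟨x, y, hr⟩ := this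
      have hxy : x ≠ y := fun h => hr (h ▸ Reachable.refl x)
      have hadj : ¬H.Adj x y := fun h => hr h.reachable
      have hstep : (H ⊔ edge x y).edgeSet.ncard = H.edgeSet.ncard + 1 := by
        rw [edgeSet_sup, edge_edgeSet_of_ne hxy, Set.union_singleton,
          Set.ncard_insert_of_notMem (by rwa [mem_edgeSet]) (Set.toFinite _)]
      have hle : Fintype.card (Sym2 W) + 1 - (H ⊔ edge x y).edgeSet.ncard ≤ n := by
        omega
      obtain ⟨T, hTle, hT, hc1, hc2⟩ := ih (H ⊔ edge x y) hle (sup_edge_isAcyclic ha hxy hr)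
      refine ⟨T, le_trans le_sup_left hTle, hT, by omega, fun _ => by omega⟩

lemma connected_of_isAcyclic_of_ncard {W : Type*} [Fintype W] [Nonempty W]
    {H : SimpleGraph W} (ha : H.IsAcyclic)
    (hcard : H.edgeSet.ncard + 1 = Fintype.card W) : H.Connected := by
  classical
  obtain ⟨T, hle, hT, hle', hlt⟩ :=
    exists_isTree_ge (Fintype.card (Sym2 W) + 1) H (Nat.sub_le _ _) ha
  haveI : Fintype T.edgeSet := (Set.toFinite _).fintype
  have h1 : T.edgeFinset.card + 1 = Fintype.card W := hT.card_edgeFinset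
  have h2 : T.edgeSet.ncard = T.edgeFinset.card := Set.ncard_eq_toFinset_card' _
  have hEq : H = T := by
    by_contra hne
    have := hlt hne
    omega
  exact hEq ▸ hT.isConnected

lemma induce_singleton_connected {V : Type*} (G : SimpleGraph V) (x : V) :
    (G.induce {x}).Connected := by
  haveI : Nonempty ({x} : Set V) := ⟨⟨x, rfl⟩⟩
  refine ⟨fun a b => ?_⟩
  have : a = b := Subtype.ext (a.2.trans b.2.symm)
  exact this ▸ Reachable.refl a

lemma exists_three_distinct {α : Type*} {s : Set α} (h : 3 ≤ s.ncard) :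
    ∃ a b c, a ∈ s ∧ b ∈ s ∧ c ∈ s ∧ a ≠ b ∧ a ≠ c ∧ b ≠ c := by
  have hf : s.Finite := by
    by_contra hf
    rw [Set.Infinite.ncard (fun h' => hf h')] at h
    omega
  obtain ⟨a, ha⟩ := (Set.ncard_pos hf).mp (by omega)
  have h2 : 2 ≤ (s \ {a}).ncard := by
    rw [Set.ncard_diff_singleton_of_mem ha]; omega
  obtain ⟨b, hb⟩ := (Set.ncard_pos (hf.sdiff (t := {a}))).mp (by omega)
  have h3 : 1 ≤ ((s \ {a}) \ {b}).ncard := by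
    rw [Set.ncard_diff_singleton_of_mem hb]; omega
  obtain ⟨c, hc⟩ := (Set.ncard_pos ((hf.sdiff (t := {a})).sdiff (t := {b}))).mp (by omega)
  refine ⟨a, b, c, ha, hb.1, hc.1.1, ?_, ?_, ?_⟩
  · exact fun h => hb.2 h.symm
  · exact fun h => hc.1.2 h.symm
  · exact fun h => hc.2 h.symm

lemma inj3 {α : Type*} {a b c : α} (h1 : a ≠ b) (h2 : a ≠ c) (h3 : b ≠ c) :
    Function.Injective ![a, b, c] := by
  intro i j hij
  fin_cases i <;> fin_cases j <;> simp_all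

lemma forall3 {α : Type*} {P : α → α → Prop} {a b c d e f : α}
    (h11 : P a d) (h12 : P a e) (h13 : P a f) (h21 : P b d) (h22 : P b e) (h23 : P b f)
    (h31 : P c d) (h32 : P c e) (h33 : P c f) :
    ∀ i j, P (![a, b, c] i) (![d, e, f] j) := by
  intro i j
  fin_cases i <;> fin_cases j <;> assumption

lemma K33_minor {V : Type*} (G : SimpleGraph V) (u v w a b c : V)
    (hL : Function.Injective ![u, v, w]) (hR : Function.Injective ![a, b, c])
    (hLR : ∀ i j, ![u, v, w] i ≠ ![a, b, c] j)
    (hadj : ∀ i j, G.Adj (![u, v, w] i) (![a, b, c] j)) :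
    (completeBipartiteGraph (Fin 3) (Fin 3)).IsMinor G := by
  refine ⟨fun z => match z with
    | .inl i => {![u, v, w] i}
    | .inr j => {![a, b, c] j}, ?_, ?_, ?_, ?_⟩
  · rintro (i | j) <;> exact Set.singleton_nonempty _
  · rintro (i | j) <;> exact induce_singleton_connected _ _
  · rintro (i | j) (i' | j') hne
    · rw [Set.disjoint_singleton]
      exact fun h => hne (congrArg Sum.inl (hL h))
    · rw [Set.disjoint_singleton]
      exact hLR i j'
    · rw [Set.disjoint_singleton]
      exact fun h => (hLR i' j) h.symm
    · rw [Set.disjoint_singleton]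
      exact fun h => hne (congrArg Sum.inr (hR h))
  · rintro (i | j) (i' | j') hadj'
    · simp at hadj'
    · exact ⟨_, rfl, _, rfl, hadj i j'⟩
    · exact ⟨_, rfl, _, rfl, (hadj i' j).symm⟩
    · simp at hadj'

lemma K5_of_cycle {V : Type*} (G : SimpleGraph V) (S : Set V) (u v : V)
    (huv : G.Adj u v) (hu : u ∉ S) (hv : v ∉ S)
    (hSu : ∀ s ∈ S, G.Adj u s) (hSv : ∀ s ∈ S, G.Adj v s)
    (a : V) (c : G.Walk a a) (hc : c.IsCycle) (hsupp : ∀ z ∈ c.support, z ∈ S) :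
    (completeGraph (Fin 5)).IsMinor G := by
  cases c with
  | nil => exact absurd hc.three_le_length (by simp)
  | cons hab p =>
    rename_i b
    have hp := (Walk.cons_isCycle_iff p hab).mp hc
    have hlen : 3 ≤ p.length + 1 := by simpa using hc.three_le_length
    cases p with
    | nil => simp at hlen
    | cons hbx q =>
      rename_i x
      obtain ⟨hq, hbq⟩ := (Walk.cons_isPath_iff _ _).mp hp.1
      have haS : a ∈ S := hsupp a (Walk.start_mem_support _)
      have hbS : b ∈ S := hsupp b (by simp)
      have hqS : ∀ z ∈ q.support, z ∈ S := fun z hz => hsupp z (by simp [hz])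
      have hxa : x ≠ a := by
        rintro rfl
        rw [Walk.isPath_iff_eq_nil] at hq
        subst hq
        simp at hlen
      obtain ⟨y, hay, r, hr⟩ := Walk.exists_eq_cons_of_ne (Ne.symm hxa) q.reverse
      have hqr : (Walk.cons hay r).IsPath := hr ▸ hq.reverse
      obtain ⟨hrp, har⟩ := (Walk.cons_isPath_iff _ _).mp hqr
      have hrq : ∀ z ∈ r.support, z ∈ q.support := by
        intro z hz
        have : z ∈ q.reverse.support := by
          rw [hr, Walk.support_cons]
          exact List.mem_cons_of_mem _ hz
        rwa [Walk.support_reverse, List.mem_reverse] at this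
      have hbr : b ∉ r.support := fun hm => hbq (hrq b hm)
      set X : Set V := {z | z ∈ r.support} with hX
      have hxX : x ∈ X := Walk.end_mem_support r
      have hyX : y ∈ X := Walk.start_mem_support r
      have hXS : ∀ z ∈ X, z ∈ S := fun z hz => hqS z (hrq z hz)
      have hua : u ≠ a := fun h => hu (h ▸ haS)
      have hub : u ≠ b := fun h => hu (h ▸ hbS)
      have hva : v ≠ a := fun h => hv (h ▸ haS)
      have hvb : v ≠ b := fun h => hv (h ▸ hbS)
      have huX : u ∉ X := fun h => hu (hXS u h)
      have hvX : v ∉ X := fun h => hv (hXS v h)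
      have hxS : x ∈ S := hXS x hxX
      have hyS : y ∈ S := hXS y hyX
      refine ⟨![{u}, {v}, {a}, {b}, X], ?_, ?_, ?_, ?_⟩
      · intro i
        fin_cases i <;>
          first
            | exact Set.singleton_nonempty _
            | exact ⟨x, hxX⟩
      · intro i
        fin_cases i <;>
          first
            | exact induce_singleton_connected _ _
            | exact r.connected_induce_support
      · have hd : ∀ (s t : V), s ≠ t → Disjoint ({s} : Set V) {t} :=
          fun s t h => Set.disjoint_singleton.mpr h
        intro i j hne
        fin_cases i <;> fin_cases j <;>
          first
            | exact absurd rfl hne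
            | exact hd _ _ huv.ne
            | exact hd _ _ huv.ne.symm
            | exact hd _ _ hua
            | exact hd _ _ hua.symm
            | exact hd _ _ hub
            | exact hd _ _ hub.symm
            | exact hd _ _ hva
            | exact hd _ _ hva.symm
            | exact hd _ _ hvb
            | exact hd _ _ hvb.symm
            | exact hd _ _ hab.ne
            | exact hd _ _ hab.ne.symm
            | exact Set.disjoint_singleton_left.mpr huX
            | exact Set.disjoint_singleton_right.mpr huX
            | exact Set.disjoint_singleton_left.mpr hvX
            | exact Set.disjoint_singleton_right.mpr hvX
            | exact Set.disjoint_singleton_left.mpr har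
            | exact Set.disjoint_singleton_right.mpr har
            | exact Set.disjoint_singleton_left.mpr hbr
            | exact Set.disjoint_singleton_right.mpr hbr
      · intro i j hij
        have hadj_ab : G.Adj a b := hab
        have hadj_bx : G.Adj b x := hbx
        have hadj_ay : G.Adj a y := hay
        fin_cases i <;> fin_cases j <;>
          first
            | exact absurd rfl hij
            | exact ⟨u, rfl, v, rfl, huv⟩
            | exact ⟨v, rfl, u, rfl, huv.symm⟩
            | exact ⟨u, rfl, a, rfl, hSu a haS⟩
            | exact ⟨a, rfl, u, rfl, (hSu a haS).symm⟩
            | exact ⟨u, rfl, b, rfl, hSu b hbS⟩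
            | exact ⟨b, rfl, u, rfl, (hSu b hbS).symm⟩
            | exact ⟨u, rfl, x, hxX, hSu x hxS⟩
            | exact ⟨x, hxX, u, rfl, (hSu x hxS).symm⟩
            | exact ⟨v, rfl, a, rfl, hSv a haS⟩
            | exact ⟨a, rfl, v, rfl, (hSv a haS).symm⟩
            | exact ⟨v, rfl, b, rfl, hSv b hbS⟩
            | exact ⟨b, rfl, v, rfl, (hSv b hbS).symm⟩
            | exact ⟨v, rfl, x, hxX, hSv x hxS⟩
            | exact ⟨x, hxX, v, rfl, (hSv x hxS).symm⟩
            | exact ⟨a, rfl, b, rfl, hadj_ab⟩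
            | exact ⟨b, rfl, a, rfl, hadj_ab.symm⟩
            | exact ⟨a, rfl, y, hyX, hadj_ay⟩
            | exact ⟨y, hyX, a, rfl, hadj_ay.symm⟩
            | exact ⟨b, rfl, x, hxX, hadj_bx⟩
            | exact ⟨x, hxX, b, rfl, hadj_bx.symm⟩

end Helpers

/-- If `G` is planar, `{u, v}` is an edge of `G` and `N(u) ∩ N(v)` is nonempty, then the
subgraph induced by `{u, v} ∪ (N(u) ∩ N(v))` has exactly `3 · |N(u) ∩ N(v)|` edges
(i.e. it is a triangulation, being a planar graph on `|N(u) ∩ N(v)| + 2` vertices) if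
and only if the subgraph induced by `N(u) ∩ N(v)` is a path. -/
theorem common_nbhd_triangulation_iff_path {V : Type*} [Fintype V] (G : SimpleGraph V)
    (hG : G.IsPlanar) (u v : V) (huv : G.Adj u v)
    (hne : (G.neighborSet u ∩ G.neighborSet v).Nonempty) :
    (G.induce ({u, v} ∪ G.neighborSet u ∩ G.neighborSet v)).edgeSet.ncard
        = 3 * (G.neighborSet u ∩ G.neighborSet v).ncard ↔
      (G.induce (G.neighborSet u ∩ G.neighborSet v)).IsPathGraph := by
  classical
  set S : Set V := G.neighborSet u ∩ G.neighborSet v with hSdef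
  have hu : u ∉ S := fun h => G.irrefl h.1
  have hv : v ∉ S := fun h => G.irrefl h.2
  have hSu : ∀ s ∈ S, G.Adj u s := fun s hs => hs.1
  have hSv : ∀ s ∈ S, G.Adj v s := fun s hs => hs.2
  have hcount := count_split G S u v huv hu hv hSu hSv
  have hk : 1 ≤ S.ncard := (Set.ncard_pos (Set.toFinite S)).mpr hne
  haveI : Nonempty ↥S := hne.to_subtype
  haveI : Fintype ↥S := (Set.toFinite S).fintype
  have hcardS : Fintype.card ↥S = S.ncard := by
    rw [Set.ncard_eq_toFinset_card', Set.toFinset_card]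
  -- the inclusion homomorphism
  have hdeg : ∀ x : ↥S, ((G.induce S).neighborSet x).ncard ≤ 2 := by
    intro x
    by_contra hgt
    push_neg at hgt
    obtain ⟨A, B, C, hA, hB, hC, hAB, hAC, hBC⟩ := exists_three_distinct (s := (G.induce S).neighborSet x) (by omega)
    apply hG.2
    have hux : u ≠ ↑x := fun h => hu (h ▸ x.2)
    have hvx : v ≠ ↑x := fun h => hv (h ▸ x.2)
    have hAd : G.Adj ↑x ↑A := hA
    have hBd : G.Adj ↑x ↑B := hB
    have hCd : G.Adj ↑x ↑C := hC
    refine K33_minor G u v ↑x ↑A ↑B ↑C (inj3 huv.ne hux hvx)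
      (inj3 (fun h => hAB (Subtype.ext h)) (fun h => hAC (Subtype.ext h))
        (fun h => hBC (Subtype.ext h))) ?_ ?_
    · exact forall3 (P := Ne)
        (fun h => hu (h ▸ A.2)) (fun h => hu (h ▸ B.2)) (fun h => hu (h ▸ C.2))
        (fun h => hv (h ▸ A.2)) (fun h => hv (h ▸ B.2)) (fun h => hv (h ▸ C.2))
        hAd.ne hBd.ne hCd.ne
    · exact forall3 (P := G.Adj)
        (hSu ↑A A.2) (hSu ↑B B.2) (hSu ↑C C.2)
        (hSv ↑A A.2) (hSv ↑B B.2) (hSv ↑C C.2)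
        hAd hBd hCd
  have hac : (G.induce S).IsAcyclic := by
    by_contra hcyc
    simp only [IsAcyclic, not_forall, not_not] at hcyc
    obtain ⟨w, c, hc⟩ := hcyc
    apply hG.1
    have hinj : Function.Injective
        ((Hom.comap Subtype.val G : G.induce S →g G)) := Subtype.val_injective
    have hc' : (c.map (Hom.comap Subtype.val G)).IsCycle := hc.map hinj
    have hsupp : ∀ z ∈ (c.map (Hom.comap Subtype.val G)).support, z ∈ S := by
      intro z hz
      erw [Walk.support_map] at hz
      obtain ⟨t, ht, rfl⟩ := List.mem_map.mp hz
      exact t.2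
    exact K5_of_cycle G S u v huv hu hv hSu hSv _ _ hc' hsupp
  constructor
  · intro hcnt
    have he : (G.induce S).edgeSet.ncard + 1 = Fintype.card ↥S := by omega
    exact ⟨connected_of_isAcyclic_of_ncard hac he, hac, hdeg⟩
  · rintro ⟨hconn, -, -⟩
    have htree : (G.induce S).IsTree := ⟨hconn, hac⟩
    haveI : Fintype (G.induce S).edgeSet := (Set.toFinite _).fintype
    have h1 : (G.induce S).edgeFinset.card + 1 = Fintype.card ↥S := htree.card_edgeFinset
    have h2 : (G.induce S).edgeSet.ncard = (G.induce S).edgeFinset.card :=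
      Set.ncard_eq_toFinset_card' _
    omega
end

section
/- If G is a simple graph containing an edge {u,v} and a cycle all of whose vertices lie in N(u) ∩ N(v), then G contains K₅ as a minor; in particular G is not planar. -/
open SimpleGraph

lemma my_induce_singleton_connected {V : Type*} (G : SimpleGraph V) (a : V) :
    (G.induce {a}).Connected := by
  constructor
  rintro ⟨b, hb⟩ ⟨d, hd⟩
  simp only [Set.mem_singleton_iff] at hb hd
  subst hb; subst hd
  exact Reachable.refl _

set_option maxHeartbeats 1000000 in
/-- If a simple graph `G` has an edge `{u, v}` and a cycle all of whose vertices lie in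
`N(u) ∩ N(v)`, then `G` has a `K₅` minor; in particular `G` is not planar. -/
theorem k5_minor_of_cycle_in_common_nbhd {V : Type*} (G : SimpleGraph V) (u v : V)
    (huv : G.Adj u v) (w : V) (c : G.Walk w w) (hc : c.IsCycle)
    (hsupp : ∀ x ∈ c.support, x ∈ G.neighborSet u ∩ G.neighborSet v) :
    (completeGraph (Fin 5)).IsMinor G ∧ ¬ G.IsPlanar := by
  have hlen := hc.three_le_length
  have key : (completeGraph (Fin 5)).IsMinor G := by
    cases c with
    | nil => simp at hlen
    | cons h₁ p =>
      rename_i x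
      cases p with
      | nil => simp at hlen
      | cons h₂ r =>
        rename_i y
        cases r with
        | nil => simp at hlen
        | cons h₃' r' =>
          obtain ⟨z, q, h₃, hq⟩ := SimpleGraph.Walk.exists_cons_eq_concat h₃' r'
          rw [hq] at hc hsupp
          have hnd := hc.2
          simp only [Walk.support_cons, Walk.support_concat, List.concat_eq_append,
            List.tail_cons, List.nodup_append, List.nodup_cons, List.mem_append,
            List.mem_singleton, List.not_mem_nil, not_false_iff, List.nodup_nil,
            and_true, true_and] at hnd
          obtain ⟨hx, hqnd, hdisj⟩ := hnd
          push_neg at hx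
          obtain ⟨hxq, hxw⟩ := hx
          have hwq : w ∉ q.support := fun h => by simpa using hdisj w h
          -- membership of cycle vertices
          have hmem : ∀ a : V, a = w ∨ a = x ∨ a ∈ q.support →
              a ∈ (Walk.cons h₁ (Walk.cons h₂ (q.concat h₃))).support := by
            intro a ha
            simp only [Walk.support_cons, Walk.support_concat, List.concat_eq_append,
              List.mem_cons, List.mem_append, List.mem_singleton]
            tauto
          have hu : ∀ a : V, a = w ∨ a = x ∨ a ∈ q.support → G.Adj u a :=
            fun a ha => (hsupp a (hmem a ha)).1
          have hv : ∀ a : V, a = w ∨ a = x ∨ a ∈ q.support → G.Adj v a :=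
            fun a ha => (hsupp a (hmem a ha)).2
          have huw : u ≠ w := fun h => G.irrefl (h ▸ hu w (Or.inl rfl))
          have hux : u ≠ x := fun h => G.irrefl (h ▸ hu x (Or.inr (Or.inl rfl)))
          have huq : u ∉ q.support := fun h => G.irrefl (hu u (Or.inr (Or.inr h)))
          have hvw : v ≠ w := fun h => G.irrefl (h ▸ hv w (Or.inl rfl))
          have hvx : v ≠ x := fun h => G.irrefl (h ▸ hv x (Or.inr (Or.inl rfl)))
          have hvq : v ∉ q.support := fun h => G.irrefl (hv v (Or.inr (Or.inr h)))
          have huv' : u ≠ v := huv.ne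
          refine ⟨![{u}, {v}, {w}, {x}, {a | a ∈ q.support}], ?_, ?_, ?_, ?_⟩
          · intro i
            fin_cases i <;> simp
          · intro i
            fin_cases i <;>
              first
                | exact my_induce_singleton_connected G _
                | exact q.connected_induce_support
          · have huq' : ∀ a ∈ q.support, u ≠ a := fun a ha h => huq (h ▸ ha)
            have hvq' : ∀ a ∈ q.support, v ≠ a := fun a ha h => hvq (h ▸ ha)
            have hwq' : ∀ a ∈ q.support, w ≠ a := fun a ha h => hwq (h ▸ ha)
            have hxq' : ∀ a ∈ q.support, x ≠ a := fun a ha h => hxq (h ▸ ha)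
            intro i j hij
            fin_cases i <;> fin_cases j <;>
              simp_all [Set.disjoint_left, eq_comm, hxw.symm]
          · intro i j hij
            have hne : i ≠ j := hij.ne
            have huwa := hu w (Or.inl rfl)
            have huxa := hu x (Or.inr (Or.inl rfl))
            have huya := hu y (Or.inr (Or.inr q.start_mem_support))
            have hvwa := hv w (Or.inl rfl)
            have hvxa := hv x (Or.inr (Or.inl rfl))
            have hvya := hv y (Or.inr (Or.inr q.start_mem_support))
            fin_cases i <;> fin_cases j
            · exact absurd rfl hne
            · exact ⟨u, rfl, v, rfl, huv⟩
            · exact ⟨u, rfl, w, rfl, huwa⟩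
            · exact ⟨u, rfl, x, rfl, huxa⟩
            · exact ⟨u, rfl, y, q.start_mem_support, huya⟩
            · exact ⟨v, rfl, u, rfl, huv.symm⟩
            · exact absurd rfl hne
            · exact ⟨v, rfl, w, rfl, hvwa⟩
            · exact ⟨v, rfl, x, rfl, hvxa⟩
            · exact ⟨v, rfl, y, q.start_mem_support, hvya⟩
            · exact ⟨w, rfl, u, rfl, huwa.symm⟩
            · exact ⟨w, rfl, v, rfl, hvwa.symm⟩
            · exact absurd rfl hne
            · exact ⟨w, rfl, x, rfl, h₁⟩
            · exact ⟨w, rfl, z, q.end_mem_support, h₃.symm⟩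
            · exact ⟨x, rfl, u, rfl, huxa.symm⟩
            · exact ⟨x, rfl, v, rfl, hvxa.symm⟩
            · exact ⟨x, rfl, w, rfl, h₁.symm⟩
            · exact absurd rfl hne
            · exact ⟨x, rfl, y, q.start_mem_support, h₂⟩
            · exact ⟨y, q.start_mem_support, u, rfl, huya.symm⟩
            · exact ⟨y, q.start_mem_support, v, rfl, hvya.symm⟩
            · exact ⟨z, q.end_mem_support, w, rfl, h₃⟩
            · exact ⟨y, q.start_mem_support, x, rfl, h₂.symm⟩
            · exact absurd rfl hne
  exact ⟨key, fun hp => hp.1 key⟩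
end
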